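/- Let m ≥ 3 and p_1, …, p_m ≥ 1 be integers, N = 1 + Σ_{i=1}^m (p_i − 1), and let Q be the Gram matrix of the star-shaped plumbing graph with a central vertex of weight −m and, for each i, a chain of p_i − 1 vertices of weight −2 attached to the central vertex. Let φ be a lattice embedding of Q into ℤ^N. Let I = {i : the support of the φ-image of the i-th chain meets the support of the φ-image of the j-th chain for some j ≠ i} and z = #{i : p_i = 1}. If I is nonempty, then |I| is even and |I| + z ≤ m ≤ |I| + z + 1. -/

import Mathlib

/-- The Gram matrix of a star-shaped plumbing graph: a central vertex of weight
`w0`; for each `i : ι` a chain of `L i` vertices of weight `−2` whose last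
vertex is adjacent to the central vertex; and for each `a : κ` an extra vertex
of weight `w a` adjacent to the central vertex. Diagonal entries are the
weights, entries at adjacent pairs of vertices are 1, all other entries are 0. -/
def starGram {ι κ : Type} [DecidableEq ι] [DecidableEq κ]
    (w0 : ℤ) (L : ι → ℕ) (w : κ → ℤ) :
    Matrix (Unit ⊕ ((Σ i : ι, Fin (L i)) ⊕ κ)) (Unit ⊕ ((Σ i : ι, Fin (L i)) ⊕ κ)) ℤ :=
  fun u v =>
    match u, v with
    | Sum.inl _, Sum.inl _ => w0
    | Sum.inl _, Sum.inr (Sum.inl ⟨i, j⟩) => if (j : ℕ) + 1 = L i then 1 else 0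
    | Sum.inl _, Sum.inr (Sum.inr _) => 1
    | Sum.inr (Sum.inl ⟨i, j⟩), Sum.inl _ => if (j : ℕ) + 1 = L i then 1 else 0
    | Sum.inr (Sum.inr _), Sum.inl _ => 1
    | Sum.inr (Sum.inl ⟨i, j⟩), Sum.inr (Sum.inl ⟨i', j'⟩) =>
        if i = i' then
          if (j : ℕ) = (j' : ℕ) then -2
          else if (j : ℕ) + 1 = (j' : ℕ) ∨ (j' : ℕ) + 1 = (j : ℕ) then 1 else 0
        else 0
    | Sum.inr (Sum.inl _), Sum.inr (Sum.inr _) => 0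
    | Sum.inr (Sum.inr _), Sum.inr (Sum.inl _) => 0
    | Sum.inr (Sum.inr a), Sum.inr (Sum.inr b) => if a = b then w a else 0

/-- A lattice embedding of the Gram matrix `Q` into `ℤ^N`: a ℤ-linear map
`φ : ℤ^V → ℤ^N` with `⟨φ(x), φ(y)⟩ = −xᵀQy` for all `x, y`. -/
def IsLatticeEmbedding {V : Type} [Fintype V] (Q : Matrix V V ℤ) (N : ℕ)
    (φ : (V → ℤ) →ₗ[ℤ] (Fin N → ℤ)) : Prop :=
  ∀ x y : V → ℤ, (∑ m, φ x m * φ y m) = -(∑ a, ∑ b, x a * Q a b * y b)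

/-- The support of the `φ`-image of the `i`-th chain: the union of the supports
of `φ` applied to the standard basis vectors corresponding to its vertices. -/
def chainSupport {ι κ : Type} [DecidableEq ι] [DecidableEq κ]
    {L : ι → ℕ} {N : ℕ}
    (φ : ((Unit ⊕ ((Σ i : ι, Fin (L i)) ⊕ κ)) → ℤ) →ₗ[ℤ] (Fin N → ℤ)) (i : ι) :
    Set (Fin N) :=
  ⋃ j : Fin (L i), Function.support (φ (Pi.single (Sum.inr (Sum.inl ⟨i, j⟩)) 1))


namespace Stmt13

variable {α : Type*} [Fintype α] [DecidableEq α]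

def dotN {α : Type*} [Fintype α] (x y : α → ℤ) : ℤ := ∑ t, x t * y t

lemma dotN_comm (x y : α → ℤ) : dotN x y = dotN y x := by
  simp [dotN, mul_comm]

lemma dotN_nonneg (x : α → ℤ) : 0 ≤ dotN x x :=
  Finset.sum_nonneg fun t _ => mul_self_nonneg _

lemma dotN_pos {x : α → ℤ} (hx : x ≠ 0) : 0 < dotN x x := by
  obtain ⟨t, ht⟩ : ∃ t, x t ≠ 0 := by
    by_contra h; push_neg at h; exact hx (funext h)
  have h1 : 0 < x t * x t := mul_self_pos.mpr ht
  calc (0 : ℤ) < x t * x t := h1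
  _ ≤ dotN x x := Finset.single_le_sum (fun s _ => mul_self_nonneg (x s)) (Finset.mem_univ t)

lemma pm {x : α → ℤ} (hx : dotN x x = 2) (t : α) :
    x t = -1 ∨ x t = 0 ∨ x t = 1 := by
  have h1 : x t * x t ≤ 2 := by
    calc x t * x t ≤ ∑ s, x s * x s :=
          Finset.single_le_sum (fun s _ => mul_self_nonneg (x s)) (Finset.mem_univ t)
    _ = 2 := hx
  have h2 : -1 ≤ x t ∧ x t ≤ 1 := by constructor <;> nlinarith
  omega

lemma pm' {x : α → ℤ} (hx : dotN x x = 2) {t : α} (ht : x t ≠ 0) :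
    x t = 1 ∨ x t = -1 := by
  rcases pm hx t with h | h | h <;> tauto

lemma dotN_smul_left (n : ℤ) (x y : α → ℤ) : dotN (n • x) y = n * dotN x y := by
  simp [dotN, Finset.mul_sum, mul_assoc]

lemma dotN_add_left (x x' y : α → ℤ) : dotN (x + x') y = dotN x y + dotN x' y := by
  simp [dotN, add_mul, Finset.sum_add_distrib]

lemma dotN_sum_left {ι : Type*} (s : Finset ι) (f : ι → α → ℤ) (y : α → ℤ) :
    dotN (∑ i ∈ s, f i) y = ∑ i ∈ s, dotN (f i) y := by
  simp only [dotN]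
  rw [Finset.sum_comm]
  refine Finset.sum_congr rfl fun t _ => ?_
  rw [Finset.sum_apply, Finset.sum_mul]

lemma dotN_pair {x y : α → ℤ} {c d : α} (hcd : c ≠ d)
    (h0 : ∀ t, t ≠ c → t ≠ d → x t = 0) :
    dotN x y = x c * y c + x d * y d := by
  have : dotN x y = ∑ t ∈ ({c, d} : Finset (α)), x t * y t := by
    rw [dotN]
    refine (Finset.sum_subset (Finset.subset_univ _) ?_).symm
    intro t _ ht
    simp only [Finset.mem_insert, Finset.mem_singleton, not_or] at ht
    rw [h0 t ht.1 ht.2, zero_mul]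
  rw [this, Finset.sum_pair hcd]

lemma exists_pair {x : α → ℤ} (hx : dotN x x = 2) :
    ∃ c d : α, c ≠ d ∧ x c ≠ 0 ∧ x d ≠ 0 ∧ ∀ t, t ≠ c → t ≠ d → x t = 0 := by
  classical
  set s : Finset (α) := Finset.univ.filter (fun t => x t ≠ 0) with hs
  have hcard : s.card = 2 := by
    have h1 : dotN x x = ∑ t ∈ s, x t * x t := by
      rw [dotN]
      refine (Finset.sum_subset (Finset.filter_subset _ _) ?_).symm
      intro t _ ht
      simp only [hs, Finset.mem_filter, Finset.mem_univ, true_and, not_not] at ht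
      rw [ht, zero_mul]
    have h2 : ∑ t ∈ s, x t * x t = s.card := by
      rw [Finset.card_eq_sum_ones, Nat.cast_sum]
      refine Finset.sum_congr rfl fun t ht => ?_
      simp only [hs, Finset.mem_filter] at ht
      rcases pm hx t with h | h | h
      · rw [h]; norm_num
      · exact absurd h ht.2
      · rw [h]; norm_num
    have h3 := hx
    rw [h1, h2] at h3
    exact_mod_cast h3
  obtain ⟨c, d, hcd, hscd⟩ := Finset.card_eq_two.mp hcard
  refine ⟨c, d, hcd, ?_, ?_, ?_⟩
  · have : c ∈ s := hscd ▸ Finset.mem_insert_self c {d}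
    simpa [hs] using this
  · have : d ∈ s := hscd ▸ (by simp)
    simpa [hs] using this
  · intro t htc htd
    by_contra h
    have : t ∈ s := by simp [hs, h]
    rw [hscd] at this
    simp only [Finset.mem_insert, Finset.mem_singleton] at this
    tauto

lemma other_coord {x : α → ℤ} (hx : dotN x x = 2) {c : α} (hc : x c ≠ 0) :
    ∃ d, d ≠ c ∧ x d ≠ 0 ∧ ∀ t, t ≠ c → t ≠ d → x t = 0 := by
  obtain ⟨c1, d1, h12, hc1, hd1, h0⟩ := exists_pair hx
  by_cases hcc : c = c1
  · subst hcc
    exact ⟨d1, fun h => h12 h.symm, hd1, h0⟩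
  · have hcd : c = d1 := by
      by_contra h
      exact hc (h0 c hcc h)
    subst hcd
    exact ⟨c1, fun h => hcc h.symm |>.elim, hc1, fun t h1 h2 => h0 t h2 h1⟩

/-- Two orthogonal norm-2 vectors sharing a coordinate have the same 2-element support. -/
lemma share_support {x y : α → ℤ} (hx : dotN x x = 2) (hy : dotN y y = 2)
    (hxy : dotN x y = 0) {c : α} (hxc : x c ≠ 0) (hyc : y c ≠ 0) :
    ∃ d, d ≠ c ∧ x d ≠ 0 ∧ y d ≠ 0 ∧ (∀ t, t ≠ c → t ≠ d → x t = 0 ∧ y t = 0) ∧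
      x c * y c + x d * y d = 0 := by
  obtain ⟨d, hdc, hxd, h0x⟩ := other_coord hx hxc
  obtain ⟨e, hec, hye, h0y⟩ := other_coord hy hyc
  have hpair : x c * y c + x d * y d = 0 := by
    rw [← dotN_pair (fun h => hdc h.symm) (fun t h1 h2 => h0x t h1 h2), hxy]
  have hyd : y d ≠ 0 := by
    intro h
    rw [h, mul_zero, add_zero] at hpair
    exact (mul_ne_zero hxc hyc) hpair
  have hde : d = e := by
    by_contra h
    exact hyd (h0y d hdc h)
  subst hde
  exact ⟨d, hdc, hxd, hyd, fun t h1 h2 => ⟨h0x t h1 h2, h0y t h1 h2⟩, hpair⟩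

/-- A third norm-2 vector orthogonal to both members of a sharing pair vanishes
on their common support. -/
lemma third_vanishes {x y w : α → ℤ} (hx : dotN x x = 2) (hy : dotN y y = 2)
    {c d : α} (hdc : d ≠ c) (hxc : x c ≠ 0) (hyc : y c ≠ 0) (hxd : x d ≠ 0)
    (hyd : y d ≠ 0) (h0 : ∀ t, t ≠ c → t ≠ d → x t = 0 ∧ y t = 0)
    (horth : x c * y c + x d * y d = 0)
    (hw : dotN w w = 2) (hwx : dotN w x = 0) (hwy : dotN w y = 0) :
    w c = 0 ∧ w d = 0 := by
  have e1 : x c * w c + x d * w d = 0 := by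
    rw [← dotN_pair (fun h => hdc h.symm) (fun t h1 h2 => (h0 t h1 h2).1), dotN_comm, hwx]
  have e2 : y c * w c + y d * w d = 0 := by
    rw [← dotN_pair (c := c) (d := d) (fun h => hdc h.symm) (fun t h1 h2 => (h0 t h1 h2).2),
      dotN_comm, hwy]
  have Wc := pm hw c
  have Wd := pm hw d
  rcases pm' hx hxc with ha | ha <;>
  rcases pm' hx hxd with hb | hb <;>
  rcases pm' hy hyc with hp | hp <;>
  rcases pm' hy hyd with hq | hq <;>
  simp only [ha, hb, hp, hq] at e1 e2 horth <;> omega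

/-- No norm-2 vector can pair (inner product −1) with one member of a sharing
pair while being orthogonal to the other. -/
lemma no_neighbor {x y w : α → ℤ} (hx : dotN x x = 2) (hy : dotN y y = 2)
    {c d : α} (hdc : d ≠ c) (hxc : x c ≠ 0) (hyc : y c ≠ 0) (hxd : x d ≠ 0)
    (hyd : y d ≠ 0) (h0 : ∀ t, t ≠ c → t ≠ d → x t = 0 ∧ y t = 0)
    (horth : x c * y c + x d * y d = 0)
    (hw : dotN w w = 2) (hwx : dotN w x = -1) (hwy : dotN w y = 0) : False := by
  have e1 : x c * w c + x d * w d = -1 := by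
    rw [← dotN_pair (fun h => hdc h.symm) (fun t h1 h2 => (h0 t h1 h2).1), dotN_comm, hwx]
  have e2 : y c * w c + y d * w d = 0 := by
    rw [← dotN_pair (c := c) (d := d) (fun h => hdc h.symm) (fun t h1 h2 => (h0 t h1 h2).2),
      dotN_comm, hwy]
  have Wc := pm hw c
  have Wd := pm hw d
  rcases pm' hx hxc with ha | ha <;>
  rcases pm' hx hxd with hb | hb <;>
  rcases pm' hy hyc with hp | hp <;>
  rcases pm' hy hyd with hq | hq <;>
  simp only [ha, hb, hp, hq] at e1 e2 horth <;> omega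

/-! ### The `Aₗ` Gram matrix and sums against it -/

def val (a b : ℕ) : ℤ := if a = b then 2 else if a + 1 = b ∨ b + 1 = a then -1 else 0

lemma val_comm (a b : ℕ) : val a b = val b a := by
  unfold val; split_ifs <;> omega

lemma sum_ite_single (ℓ t : ℕ) (c : ℤ) (ht : t < ℓ) :
    ∑ n ∈ Finset.range ℓ, (if n = t then c else 0) = c := by
  rw [Finset.sum_ite_eq' (Finset.range ℓ) t (fun _ => c)]
  simp [ht]

lemma sum_val_row (ℓ k : ℕ) (hk : k < ℓ) (G : ℕ → ℤ) :
    ∑ n ∈ Finset.range ℓ, G n * val n k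
      = 2 * G k + (if 1 ≤ k then -(G (k - 1)) else 0)
        + (if k + 1 < ℓ then -(G (k + 1)) else 0) := by
  have hpt : ∀ n, G n * val n k
      = (if n = k then 2 * G k else 0) + (if n + 1 = k then -(G (k - 1)) else 0)
        + (if n = k + 1 then -(G (k + 1)) else 0) := by
    intro n
    by_cases h1 : n = k
    · subst h1
      simp only [val, eq_self_iff_true, if_true]
      rw [if_neg (show ¬ n + 1 = n by omega), if_neg (show ¬ n = n + 1 by omega)]
      ring
    · by_cases h2 : n + 1 = k
      · subst h2
        simp only [val, eq_self_iff_true, if_true, true_or]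
        rw [if_neg h1, if_neg h1, if_neg (show ¬ n = n + 1 + 1 by omega), Nat.add_sub_cancel]
        ring
      · by_cases h3 : n = k + 1
        · subst h3
          simp only [val, eq_self_iff_true, if_true, or_true]
          rw [if_neg h1, if_neg h1, if_neg h2]
          ring
        · simp only [val]
          rw [if_neg h1, if_neg (show ¬ (n + 1 = k ∨ k + 1 = n) by omega),
            if_neg h1, if_neg h2, if_neg h3]
          ring
  rw [Finset.sum_congr rfl fun n _ => hpt n]
  rw [Finset.sum_add_distrib, Finset.sum_add_distrib]
  congr 1
  · congr 1
    · exact sum_ite_single ℓ k _ hk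
    · rcases Nat.eq_zero_or_pos k with h | h
      · subst h
        rw [if_neg (show ¬ (1:ℕ) ≤ 0 by omega)]
        exact Finset.sum_eq_zero fun n _ => if_neg (by omega)
      · rw [if_pos (show (1:ℕ) ≤ k by omega)]
        have heq : ∀ n ∈ Finset.range ℓ, (if n + 1 = k then -(G (k - 1)) else 0)
            = (if n = k - 1 then -(G (k - 1)) else 0) := by
          intro n _
          congr 1
          simp only [eq_iff_iff]
          omega
        rw [Finset.sum_congr rfl heq, sum_ite_single ℓ (k - 1) _ (by omega)]
  · by_cases h : k + 1 < ℓ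
    · rw [if_pos h, sum_ite_single ℓ (k + 1) _ h]
    · rw [if_neg h]
      exact Finset.sum_eq_zero fun n hn => if_neg (by
        simp only [Finset.mem_range] at hn; omega)

lemma sum_val_coeff (ℓ k : ℕ) (hk : k < ℓ) :
    ∑ n ∈ Finset.range ℓ, ((n : ℤ) + 1) * val n k
      = if k + 1 = ℓ then (ℓ : ℤ) + 1 else 0 := by
  rw [sum_val_row ℓ k hk (fun n => (n : ℤ) + 1)]
  by_cases h : k + 1 = ℓ
  · rw [if_pos h, if_neg (show ¬ k + 1 < ℓ by omega)]
    rcases Nat.eq_zero_or_pos k with h0 | h0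
    · rw [if_neg (show ¬ (1:ℕ) ≤ k by omega)]
      subst h0
      rw [← h]
      norm_num
    · rw [if_pos (show (1:ℕ) ≤ k by omega)]
      rw [show ((k - 1 : ℕ) : ℤ) = (k : ℤ) - 1 by
        rw [Nat.cast_sub (by omega : 1 ≤ k)]; norm_num]
      rw [show ((ℓ : ℤ)) = (k : ℤ) + 1 by exact_mod_cast congrArg (Nat.cast (R := ℤ)) h.symm]
      ring
  · rw [if_neg h, if_pos (show k + 1 < ℓ by omega)]
    rcases Nat.eq_zero_or_pos k with h0 | h0
    · rw [if_neg (show ¬ (1:ℕ) ≤ k by omega)]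
      subst h0
      norm_num
    · rw [if_pos (show (1:ℕ) ≤ k by omega)]
      rw [show ((k - 1 : ℕ) : ℤ) = (k : ℤ) - 1 by
        rw [Nat.cast_sub (by omega : 1 ≤ k)]; norm_num]
      push_cast
      ring

/-- Solving the `Aₗ` recurrence: a vector orthogonal to an `Aₗ` chain
(in the Gram sense) is zero. -/
lemma solve_rec (ℓ : ℕ) (hℓ : 1 ≤ ℓ) (G : ℕ → ℤ)
    (hrec : ∀ k, k < ℓ → 2 * G k + (if 1 ≤ k then -(G (k - 1)) else 0)
      + (if k + 1 < ℓ then -(G (k + 1)) else 0) = 0) :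
    ∀ n, n < ℓ → G n = 0 := by
  have claim : ∀ n, n < ℓ → G n = ((n : ℤ) + 1) * G 0 := by
    intro n
    induction n using Nat.strong_induction_on with
    | _ n ih =>
      intro hn
      match n with
      | 0 => norm_num
      | 1 =>
        have e := hrec 0 (by omega)
        rw [if_neg (by omega), if_pos (by omega)] at e
        push_cast
        linarith
      | (k + 2) =>
        have e := hrec (k + 1) (by omega)
        rw [if_pos (by omega), if_pos (by omega)] at e
        simp only [Nat.add_sub_cancel] at e
        have i1 := ih (k + 1) (by omega) (by omega)
        have i2 := ih k (by omega) (by omega)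
        push_cast at i1 i2 ⊢
        linarith
  have hG0 : G 0 = 0 := by
    rcases Nat.lt_or_ge ℓ 2 with h2 | h2
    · have : ℓ = 1 := by omega
      subst this
      have e := hrec 0 (by omega)
      rw [if_neg (by omega), if_neg (by omega)] at e
      linarith
    · have e := hrec (ℓ - 1) (by omega)
      rw [if_pos (by omega), if_neg (by omega)] at e
      have i1 := claim (ℓ - 1) (by omega)
      have i2 := claim (ℓ - 2) (by omega)
      have c1 : ((ℓ - 1 : ℕ) : ℤ) = (ℓ : ℤ) - 1 := by
        push_cast [Nat.cast_sub (by omega : 1 ≤ ℓ)]; ring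
      have c2 : ((ℓ - 2 : ℕ) : ℤ) = (ℓ : ℤ) - 2 := by
        push_cast [Nat.cast_sub (by omega : 2 ≤ ℓ)]; ring
      have hd : ℓ - 1 - 1 = ℓ - 2 := by omega
      rw [hd] at e
      rw [i1, i2, c1, c2] at e
      have hfact : ((ℓ : ℤ) + 1) * G 0 = 0 := by linarith [e]
      have hne : ((ℓ : ℤ) + 1) ≠ 0 := by positivity
      exact (mul_eq_zero.mp hfact).resolve_left hne
  intro n hn
  rw [claim n hn, hG0, mul_zero]

lemma dotN_sum_smul_left {α : Type*} [Fintype α] [DecidableEq α] {ℓ : ℕ} (a : Fin ℓ → ℤ)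
    (u : Fin ℓ → α → ℤ) (y : α → ℤ) :
    dotN (∑ j : Fin ℓ, a j • u j) y = ∑ j : Fin ℓ, a j * dotN (u j) y := by
  rw [dotN_sum_left]
  exact Finset.sum_congr rfl fun j _ => dotN_smul_left (a j) (u j) y

lemma sum_subtype_eq_dotN {N : ℕ} (S : Finset (Fin N)) (x y : Fin N → ℤ)
    (hx : ∀ t, t ∉ S → x t = 0) :
    ∑ s : {a // a ∈ S}, x s * y s = dotN x y := by
  rw [dotN, Finset.sum_coe_sort S (fun t => x t * y t)]
  refine Finset.sum_subset (Finset.subset_univ S) fun t _ ht => ?_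
  rw [hx t ht, zero_mul]

lemma sum_last (ℓ : ℕ) (hℓ : 1 ≤ ℓ) (C : ℤ) :
    ∑ n ∈ Finset.range ℓ, (((n : ℤ) + 1) * if n + 1 = ℓ then C else 0) = (ℓ : ℤ) * C := by
  have hpt : ∀ n ∈ Finset.range ℓ, (((n : ℤ) + 1) * if n + 1 = ℓ then C else 0)
      = if n = ℓ - 1 then (ℓ : ℤ) * C else 0 := by
    intro n _
    by_cases h : n + 1 = ℓ
    · rw [if_pos h, if_pos (by omega)]
      have hcast : ((n : ℤ) + 1) = (ℓ : ℤ) := by omega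
      rw [hcast]
    · rw [if_neg h, if_neg (by omega), mul_zero]
  rw [Finset.sum_congr rfl hpt, sum_ite_single ℓ (ℓ - 1) _ (by omega)]

/-- An `Aₗ` chain of vectors attached to a vector `v0` occupies at least `ℓ + 1`
coordinates. -/
lemma support_card_lower {N ℓ : ℕ} (hℓ : 1 ≤ ℓ) (u : Fin ℓ → Fin N → ℤ) (v0 : Fin N → ℤ)
    (hGram : ∀ j k : Fin ℓ, dotN (u j) (u k) = val (j : ℕ) (k : ℕ))
    (hv0 : ∀ j : Fin ℓ, dotN v0 (u j) = if (j : ℕ) + 1 = ℓ then -1 else 0)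
    (S : Finset (Fin N)) (hS : ∀ (j : Fin ℓ) (t : Fin N), t ∉ S → u j t = 0) :
    ℓ + 1 ≤ S.card := by
  classical
  set c : Fin N → ℤ := ∑ j : Fin ℓ, (((j : ℕ) : ℤ) + 1) • u j with hc
  have hcu : ∀ k : Fin ℓ, dotN c (u k) = if (k : ℕ) + 1 = ℓ then (ℓ : ℤ) + 1 else 0 := by
    intro k
    rw [hc, dotN_sum_smul_left]
    rw [Finset.sum_congr rfl fun j (_ : j ∈ Finset.univ) => by rw [hGram j k]]
    rw [Fin.sum_univ_eq_sum_range (fun n => ((n : ℤ) + 1) * val n (k : ℕ)) ℓ]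
    exact sum_val_coeff ℓ (k : ℕ) k.isLt
  have hcc : dotN c c = (ℓ : ℤ) * ((ℓ : ℤ) + 1) := by
    rw [hc, dotN_sum_smul_left, ← hc]
    rw [Finset.sum_congr rfl fun j (_ : j ∈ Finset.univ) => by
      rw [dotN_comm (u j) c, hcu j]]
    rw [Fin.sum_univ_eq_sum_range
      (fun n => ((n : ℤ) + 1) * if n + 1 = ℓ then (ℓ : ℤ) + 1 else 0) ℓ]
    exact sum_last ℓ hℓ _
  set d : Fin N → ℤ := c + ((ℓ : ℤ) + 1) • v0 with hd
  have hdu : ∀ k : Fin ℓ, dotN d (u k) = 0 := by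
    intro k
    rw [hd, dotN_add_left, dotN_smul_left, hcu k, hv0 k]
    split_ifs <;> ring
  rcases Classical.em (∃ s : Fin N, s ∈ S ∧ d s ≠ 0) with ⟨s0, hs0S, hds0⟩ | hd0
  · -- `d` is nonzero on `S`: the chain together with `d` is independent
    set W : (Fin ℓ ⊕ Unit) → ({x // x ∈ S} → ℤ) :=
      Sum.elim (fun j => fun s => u j s) (fun _ => fun s => d s) with hW
    have key : ∀ (g : Fin ℓ ⊕ Unit → ℤ) (y : Fin N → ℤ),
        (∑ s : {a // a ∈ S}, (∑ j : Fin ℓ, g (Sum.inl j) * u j s) * y s)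
          = ∑ j : Fin ℓ, g (Sum.inl j) * dotN (u j) y := by
      intro g y
      have h1 : ∀ s : {a // a ∈ S}, (∑ j : Fin ℓ, g (Sum.inl j) * u j s) * y s
          = ∑ j : Fin ℓ, g (Sum.inl j) * (u j s * y s) := by
        intro s
        rw [Finset.sum_mul]
        exact Finset.sum_congr rfl fun j _ => by ring
      rw [Finset.sum_congr rfl fun s _ => h1 s, Finset.sum_comm]
      refine Finset.sum_congr rfl fun j _ => ?_
      rw [← Finset.mul_sum, sum_subtype_eq_dotN S (u j) y (hS j)]
    have hind : LinearIndependent ℤ W := by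
      rw [Fintype.linearIndependent_iff]
      intro g hg
      have happ : ∀ s : {x // x ∈ S},
          (∑ j : Fin ℓ, g (Sum.inl j) * u j s) + g (Sum.inr ()) * d s = 0 := by
        intro s
        have h2 := congrFun hg s
        simp only [Finset.sum_apply, Pi.smul_apply, smul_eq_mul, Pi.zero_apply,
          Fintype.sum_sum_type, Finset.univ_unique, Finset.sum_singleton, hW,
          Sum.elim_inl, Sum.elim_inr] at h2
        convert h2 using 2
      have hb : g (Sum.inr ()) = 0 := by
        have h0 : ∑ s : {x // x ∈ S},
            ((∑ j : Fin ℓ, g (Sum.inl j) * u j s) + g (Sum.inr ()) * d s) * d s = 0 :=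
          Finset.sum_eq_zero fun s _ => by rw [happ s, zero_mul]
        have h3 : ∑ s : {x // x ∈ S},
            ((∑ j : Fin ℓ, g (Sum.inl j) * u j s) + g (Sum.inr ()) * d s) * d s
            = (∑ s : {x // x ∈ S}, (∑ j : Fin ℓ, g (Sum.inl j) * u j s) * d s)
              + g (Sum.inr ()) * ∑ s : {x // x ∈ S}, d s * d s := by
          rw [Finset.mul_sum, ← Finset.sum_add_distrib]
          exact Finset.sum_congr rfl fun s _ => by ring
        rw [h3, key g d] at h0
        have h4 : ∑ j : Fin ℓ, g (Sum.inl j) * dotN (u j) d = 0 :=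
          Finset.sum_eq_zero fun j _ => by rw [dotN_comm, hdu j, mul_zero]
        rw [h4, zero_add] at h0
        have h5 : 0 < ∑ s : {x // x ∈ S}, d s * d s := by
          have h6 := Finset.single_le_sum (f := fun s : {x // x ∈ S} => d s * d s)
            (fun s _ => mul_self_nonneg (d s)) (Finset.mem_univ (⟨s0, hs0S⟩ : {x // x ∈ S}))
          have h7 : 0 < d s0 * d s0 := mul_self_pos.mpr hds0
          exact lt_of_lt_of_le h7 h6
        exact (mul_eq_zero.mp h0).resolve_right (by omega)
      have hAz : ∀ s : {x // x ∈ S}, (∑ j : Fin ℓ, g (Sum.inl j) * u j s) = 0 := by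
        intro s
        have := happ s
        rw [hb, zero_mul, add_zero] at this
        exact this
      have hrow : ∀ k : Fin ℓ,
          ∑ j : Fin ℓ, g (Sum.inl j) * val (j : ℕ) (k : ℕ) = 0 := by
        intro k
        have h1 : ∑ s : {x // x ∈ S},
            (∑ j : Fin ℓ, g (Sum.inl j) * u j s) * u k s = 0 :=
          Finset.sum_eq_zero fun s _ => by rw [hAz s, zero_mul]
        rw [key g (u k)] at h1
        rw [← h1]
        exact Finset.sum_congr rfl fun j _ => by rw [hGram j k]
      set G : ℕ → ℤ := fun n => if h : n < ℓ then g (Sum.inl ⟨n, h⟩) else 0 with hG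
      have hGrec : ∀ n, n < ℓ → G n = 0 := by
        apply solve_rec ℓ hℓ G
        intro k hk
        rw [← sum_val_row ℓ k hk G]
        have h8 := hrow ⟨k, hk⟩
        rw [← Fin.sum_univ_eq_sum_range (fun n => G n * val n k) ℓ, ← h8]
        refine Finset.sum_congr rfl fun j _ => ?_
        congr 1
        simp only [hG, j.isLt, dif_pos, Fin.eta]
      intro x
      rcases x with j | un
      · have h9 := hGrec (j : ℕ) j.isLt
        rw [hG] at h9
        simp only [j.isLt, dif_pos, Fin.eta] at h9
        exact h9
      · rcases un with ⟨⟩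
        exact hb
    have hcard := hind.fintype_card_le_finrank
    rw [Module.finrank_fintype_fun_eq_card, Fintype.card_coe] at hcard
    simpa using hcard
  · -- `d` vanishes on `S`: contradiction by a divisibility count
    exfalso
    push_neg at hd0
    have hcS : ∀ t, t ∉ S → c t = 0 := by
      intro t ht
      rw [hc, Finset.sum_apply]
      exact Finset.sum_eq_zero fun j _ => by
        rw [Pi.smul_apply, hS j t ht, smul_zero]
    set w : Fin N → ℤ := fun t => if t ∈ S then -(v0 t) else 0 with hw
    have hcw : c = ((ℓ : ℤ) + 1) • w := by
      funext t
      by_cases ht : t ∈ S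
      · have hdt : d t = 0 := hd0 t ht
        rw [hd] at hdt
        simp only [Pi.add_apply, Pi.smul_apply, smul_eq_mul] at hdt
        simp only [hw, Pi.smul_apply, smul_eq_mul, if_pos ht]
        linarith
      · rw [hcS t ht]
        simp only [hw, Pi.smul_apply, smul_eq_mul, if_neg ht, mul_zero]
    have hq : dotN c c = (((ℓ : ℤ) + 1) * ((ℓ : ℤ) + 1)) * dotN w w := by
      rw [hcw, dotN_smul_left, dotN_comm, dotN_smul_left, dotN_comm w w]
      ring
    rw [hcc] at hq
    have hwnn : 0 ≤ dotN w w := dotN_nonneg w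
    have hne : ((ℓ : ℤ) + 1) ≠ 0 := by positivity
    have h1 : ((ℓ : ℤ) + 1) * (ℓ : ℤ) = ((ℓ : ℤ) + 1) * (((ℓ : ℤ) + 1) * dotN w w) := by
      linear_combination hq
    have hℓq : (ℓ : ℤ) = ((ℓ : ℤ) + 1) * dotN w w := mul_left_cancel₀ hne h1
    rcases (show dotN w w = 0 ∨ 1 ≤ dotN w w by omega) with h2 | h2
    · rw [h2, mul_zero] at hℓq
      omega
    · have h3 : ((ℓ : ℤ) + 1) * 1 ≤ ((ℓ : ℤ) + 1) * dotN w w :=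
        mul_le_mul_of_nonneg_left h2 (by positivity)
      rw [mul_one] at h3
      linarith

lemma even_card_of_involution {β : Type*} [DecidableEq β] :
    ∀ (s : Finset β) (f : β → β), (∀ i ∈ s, f i ∈ s) → (∀ i ∈ s, f (f i) = i) →
      (∀ i ∈ s, f i ≠ i) → Even s.card := by
  intro s
  induction s using Finset.strongInduction with
  | _ s ih =>
    intro f h1 h2 h3
    rcases s.eq_empty_or_nonempty with rfl | ⟨i, hi⟩
    · simp
    · have hfi : f i ∈ s := h1 i hi
      have hne : f i ≠ i := h3 i hi
      have hfimem : f i ∈ s.erase i := Finset.mem_erase.mpr ⟨hne, hfi⟩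
      set t := (s.erase i).erase (f i) with htdef
      have hts : t ⊂ s := by
        refine Finset.ssubset_of_subset_of_ssubset ?_ (Finset.erase_ssubset hi)
        exact Finset.erase_subset _ _
      have htmem : ∀ j, j ∈ t ↔ j ≠ f i ∧ j ≠ i ∧ j ∈ s := by
        intro j
        simp [htdef, Finset.mem_erase, and_assoc]
      have ht := ih t hts f ?_ ?_ ?_
      · have hc : t.card + 2 = s.card := by
          rw [htdef, Finset.card_erase_of_mem hfimem, Finset.card_erase_of_mem hi]
          have h2le : 2 ≤ s.card := Finset.one_lt_card.mpr ⟨i, hi, f i, hfi, fun h => hne h.symm⟩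
          omega
        obtain ⟨r, hr⟩ := ht
        exact ⟨r + 1, by omega⟩
      · intro j hj
        rw [htmem] at hj ⊢
        obtain ⟨hj1, hj2, hj3⟩ := hj
        refine ⟨?_, ?_, h1 j hj3⟩
        · intro h
          apply hj2
          have := congrArg f h
          rw [h2 j hj3, h2 i hi] at this
          exact this
        · intro h
          apply hj1
          have := congrArg f h
          rw [h2 j hj3] at this
          rw [this]
      · intro j hj
        rw [htmem] at hj
        exact h2 j hj.2.2
      · intro j hj
        rw [htmem] at hj
        exact h3 j hj.2.2

end Stmt13


open Stmt13 in
/-- For a lattice embedding of the plumbing `X(p_1, …, p_m)` of a positive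
pretzel link, if the set `I` of chains whose support meets the support of some
other chain is nonempty, then `|I|` is even and `|I| + z ≤ m ≤ |I| + z + 1`,
where `z` is the number of parameters equal to 1. -/
theorem stmt_13 (m : ℕ) (hm : 3 ≤ m) (p : Fin m → ℕ) (hp : ∀ i, 1 ≤ p i)
    (N : ℕ) (hN : N = 1 + ∑ i, (p i - 1))
    (φ : ((Unit ⊕ ((Σ i : Fin m, Fin (p i - 1)) ⊕ Empty)) → ℤ) →ₗ[ℤ] (Fin N → ℤ))
    (hφ : IsLatticeEmbedding
      (starGram (-(m : ℤ)) (fun i => p i - 1) (fun e : Empty => e.elim)) N φ)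
    (I : Set (Fin m))
    (hI : I = {i : Fin m | ∃ j, j ≠ i ∧ ((chainSupport φ i) ∩ (chainSupport φ j)).Nonempty})
    (z : ℕ) (hz : z = (Finset.univ.filter fun i => p i = 1).card)
    (hne : I.Nonempty) :
    Even I.ncard ∧ I.ncard + z ≤ m ∧ m ≤ I.ncard + z + 1 := by
  classical
  set v : (Unit ⊕ ((Σ i : Fin m, Fin (p i - 1)) ⊕ Empty)) → (Fin N → ℤ) :=
    fun a => φ (Pi.single a 1) with hv
  have hdot : ∀ a b, dotN (v a) (v b)
      = -(starGram (-(m : ℤ)) (fun i => p i - 1) (fun e : Empty => e.elim)) a b := by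
    intro a b
    have h := hφ (Pi.single a 1) (Pi.single b 1)
    rw [hv]
    rw [dotN, h]
    simp [Pi.single_apply, ite_mul, mul_ite, Finset.sum_ite_eq']
  -- Gram extraction
  have gA : ∀ (i : Fin m) (j k : Fin (p i - 1)),
      dotN (v (Sum.inr (Sum.inl ⟨i, j⟩))) (v (Sum.inr (Sum.inl ⟨i, k⟩))) = val (j : ℕ) (k : ℕ) := by
    intro i j k
    rw [hdot]
    show -(if i = i then
        if (j : ℕ) = (k : ℕ) then (-2 : ℤ)
        else if (j : ℕ) + 1 = (k : ℕ) ∨ (k : ℕ) + 1 = (j : ℕ) then 1 else 0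
      else 0) = _
    rw [if_pos rfl, val]
    split_ifs <;> norm_num
  have gDiff : ∀ (i i' : Fin m) (j : Fin (p i - 1)) (k : Fin (p i' - 1)), i ≠ i' →
      dotN (v (Sum.inr (Sum.inl ⟨i, j⟩))) (v (Sum.inr (Sum.inl ⟨i', k⟩))) = 0 := by
    intro i i' j k h
    rw [hdot]
    show -(if i = i' then
        if (j : ℕ) = (k : ℕ) then (-2 : ℤ)
        else if (j : ℕ) + 1 = (k : ℕ) ∨ (k : ℕ) + 1 = (j : ℕ) then 1 else 0
      else 0) = 0
    rw [if_neg h, neg_zero]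
  have gCtr : ∀ (i : Fin m) (j : Fin (p i - 1)),
      dotN (v (Sum.inl ())) (v (Sum.inr (Sum.inl ⟨i, j⟩)))
        = if (j : ℕ) + 1 = p i - 1 then -1 else 0 := by
    intro i j
    rw [hdot]
    show -(if (j : ℕ) + 1 = p i - 1 then (1 : ℤ) else 0) = _
    split_ifs <;> norm_num
  have n2 : ∀ (i : Fin m) (j : Fin (p i - 1)),
      dotN (v (Sum.inr (Sum.inl ⟨i, j⟩))) (v (Sum.inr (Sum.inl ⟨i, j⟩))) = 2 := by
    intro i j
    rw [gA, val, if_pos rfl]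
  -- chain supports as finsets
  set FS : Fin m → Finset (Fin N) := fun i => Finset.univ.filter
    (fun t => ∃ jj : Fin (p i - 1), v (Sum.inr (Sum.inl ⟨i, jj⟩)) t ≠ 0) with hFS
  have hFSmem : ∀ i t, t ∈ FS i ↔ ∃ jj : Fin (p i - 1), v (Sum.inr (Sum.inl ⟨i, jj⟩)) t ≠ 0 := by
    intro i t
    simp [hFS]
  have hImem : ∀ i, i ∈ I ↔ ∃ j, j ≠ i ∧ ∃ t, t ∈ FS i ∧ t ∈ FS j := by
    intro i
    rw [hI]
    simp only [Set.mem_setOf_eq]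
    constructor
    · rintro ⟨j, hj, t, ht1, ht2⟩
      refine ⟨j, hj, t, ?_, ?_⟩
      · rw [hFSmem]
        simp only [chainSupport, Set.mem_iUnion, Function.mem_support] at ht1
        exact ht1
      · rw [hFSmem]
        simp only [chainSupport, Set.mem_iUnion, Function.mem_support] at ht2
        exact ht2
    · rintro ⟨j, hj, t, ht1, ht2⟩
      refine ⟨j, hj, t, ?_, ?_⟩
      · simp only [chainSupport, Set.mem_iUnion, Function.mem_support]
        exact (hFSmem i t).1 ht1
      · simp only [chainSupport, Set.mem_iUnion, Function.mem_support]
        exact (hFSmem j t).1 ht2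
  -- every chain meeting another chain has length 1
  have hlen : ∀ i ∈ I, p i - 1 = 1 := by
    intro i hiI
    obtain ⟨j, hji, t, hti, htj⟩ := (hImem i).1 hiI
    obtain ⟨s, hs⟩ := (hFSmem i t).1 hti
    obtain ⟨s', hs'⟩ := (hFSmem j t).1 htj
    have hij : i ≠ j := fun h => hji h.symm
    have hxy : dotN (v (Sum.inr (Sum.inl ⟨i, s⟩))) (v (Sum.inr (Sum.inl ⟨j, s'⟩))) = 0 :=
      gDiff i j s s' hij
    obtain ⟨d, hdc, hxd, hyd, h0, horth⟩ := share_support (n2 i s) (n2 j s') hxy hs hs'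
    by_contra hlen1
    have h2 : 2 ≤ p i - 1 := by
      have h1 := s.isLt
      omega
    obtain ⟨s2, hadj⟩ : ∃ s2 : Fin (p i - 1),
        (s2 : ℕ) + 1 = (s : ℕ) ∨ (s : ℕ) + 1 = (s2 : ℕ) := by
      rcases Nat.lt_or_ge ((s : ℕ) + 1) (p i - 1) with h | h
      · exact ⟨⟨(s : ℕ) + 1, h⟩, Or.inr rfl⟩
      · have hs1 : 1 ≤ (s : ℕ) := by
          have := s.isLt
          omega
        exact ⟨⟨(s : ℕ) - 1, by omega⟩, Or.inl (by
          show (s : ℕ) - 1 + 1 = (s : ℕ)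
          omega)⟩
    have hwx : dotN (v (Sum.inr (Sum.inl ⟨i, s2⟩))) (v (Sum.inr (Sum.inl ⟨i, s⟩))) = -1 := by
      rw [gA, val]
      rw [if_neg (show ¬ (s2 : ℕ) = (s : ℕ) by omega), if_pos hadj]
    have hwy : dotN (v (Sum.inr (Sum.inl ⟨i, s2⟩))) (v (Sum.inr (Sum.inl ⟨j, s'⟩))) = 0 :=
      gDiff i j s2 s' hij
    exact no_neighbor (n2 i s) (n2 j s') hdc hs hs' hxd hyd h0 horth (n2 i s2) hwx hwy
  -- a chain cannot meet two others, nor can three chains share a coordinate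
  have huniq : ∀ (i j k : Fin m) (t t' : Fin N), i ≠ j → i ≠ k → j ≠ k →
      t ∈ FS i → t ∈ FS j → t' ∈ FS i → t' ∈ FS k → False := by
    intro i j k t t' hij hik hjk hti htj hti' htk'
    have hiI : i ∈ I := (hImem i).2 ⟨j, Ne.symm hij, t, hti, htj⟩
    obtain ⟨s, hs⟩ := (hFSmem i t).1 hti
    obtain ⟨s2, hs2⟩ := (hFSmem i t').1 hti'
    obtain ⟨s', hs'⟩ := (hFSmem j t).1 htj
    obtain ⟨s'', hs''⟩ := (hFSmem k t').1 htk'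
    have hss2 : s2 = s := by
      have hl := hlen i hiI
      have h1 := s.isLt
      have h2 := s2.isLt
      apply Fin.ext
      omega
    rw [hss2] at hs2
    have hxy : dotN (v (Sum.inr (Sum.inl ⟨i, s⟩))) (v (Sum.inr (Sum.inl ⟨j, s'⟩))) = 0 :=
      gDiff i j s s' hij
    obtain ⟨d, hdc, hxd, hyd, h0, horth⟩ := share_support (n2 i s) (n2 j s') hxy hs hs'
    have hwt := third_vanishes (n2 i s) (n2 j s') hdc hs hs' hxd hyd h0 horth (n2 k s'')
      (gDiff k i s'' s (Ne.symm hik)) (gDiff k j s'' s' (Ne.symm hjk))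
    by_cases ht't : t' = t
    · rw [ht't] at hs''
      exact hs'' hwt.1
    · by_cases ht'd : t' = d
      · rw [ht'd] at hs''
        exact hs'' hwt.2
      · exact hs2 ((h0 t' ht't ht'd).1)
  -- the pairing involution on I
  set Ifin : Finset (Fin m) := Finset.univ.filter (· ∈ I) with hIfin
  have hIfinmem : ∀ i, i ∈ Ifin ↔ i ∈ I := by
    intro i
    simp [hIfin]
  have hIco : I.ncard = Ifin.card := by
    have hIeq : I = ↑Ifin := by
      ext i
      simp [hIfinmem]
    rw [hIeq, Set.ncard_coe_finset]
  set σ : Fin m → Fin m := fun i =>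
    if h : ∃ j, j ≠ i ∧ ∃ t, t ∈ FS i ∧ t ∈ FS j then h.choose else i with hσ
  have hσspec : ∀ i ∈ Ifin, σ i ≠ i ∧ ∃ t, t ∈ FS i ∧ t ∈ FS (σ i) := by
    intro i hi
    have h := (hImem i).1 ((hIfinmem i).1 hi)
    rw [hσ]
    simp only [dif_pos h]
    exact h.choose_spec
  have hσI : ∀ i ∈ Ifin, σ i ∈ Ifin := by
    intro i hi
    obtain ⟨hne', t, hti, htσ⟩ := hσspec i hi
    rw [hIfinmem]
    exact (hImem (σ i)).2 ⟨i, fun h => hne' h.symm, t, htσ, hti⟩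
  have hσinv : ∀ i ∈ Ifin, σ (σ i) = i := by
    intro i hi
    obtain ⟨hne1, t, hti, htσ⟩ := hσspec i hi
    obtain ⟨hne2, t', htσ', htσσ⟩ := hσspec (σ i) (hσI i hi)
    by_contra hne3
    exact huniq (σ i) i (σ (σ i)) t t' hne1 (Ne.symm hne2) (fun h => hne3 h.symm)
      htσ hti htσ' htσσ
  have heven : Even Ifin.card :=
    even_card_of_involution Ifin σ hσI hσinv (fun i hi => (hσspec i hi).1)
  -- the three classes of chains
  set Zfin : Finset (Fin m) := Finset.univ.filter (fun i => p i = 1) with hZfin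
  set Kfin : Finset (Fin m) := Finset.univ.filter (fun i => i ∉ I ∧ p i ≠ 1) with hKfin
  have hzZ : z = Zfin.card := hz
  have hIZ : ∀ i ∈ Ifin, p i ≠ 1 := by
    intro i hi
    have := hlen i ((hIfinmem i).1 hi)
    omega
  have hpart : Ifin ∪ Zfin ∪ Kfin = Finset.univ := by
    ext i
    simp only [Finset.mem_union, Finset.mem_filter, Finset.mem_univ, true_and, hIfin, hZfin,
      hKfin]
    tauto
  have hdisjIZ : Disjoint Ifin Zfin := by
    rw [Finset.disjoint_left]
    intro i hi hZ
    exact hIZ i hi (by simpa [hZfin] using hZ)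
  have hdisjIZK : Disjoint (Ifin ∪ Zfin) Kfin := by
    rw [Finset.disjoint_left]
    intro i hi hK
    simp only [Finset.mem_union, Finset.mem_filter, Finset.mem_univ, true_and, hIfin,
      hZfin] at hi
    simp only [Finset.mem_filter, Finset.mem_univ, true_and, hKfin] at hK
    tauto
  have hmsum : Ifin.card + Zfin.card + Kfin.card = m := by
    have h1 : (Ifin ∪ Zfin ∪ Kfin).card = m := by
      rw [hpart, Finset.card_univ, Fintype.card_fin]
    rw [Finset.card_union_of_disjoint hdisjIZK, Finset.card_union_of_disjoint hdisjIZ] at h1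
    omega
  -- support cardinality bounds
  have hKlow : ∀ i ∈ Kfin, (p i - 1) + 1 ≤ (FS i).card := by
    intro i hi
    have hi' : p i ≠ 1 := by
      simp only [Finset.mem_filter, Finset.mem_univ, true_and, hKfin] at hi
      exact hi.2
    have hℓ : 1 ≤ p i - 1 := by
      have := hp i
      omega
    refine support_card_lower hℓ (fun j => v (Sum.inr (Sum.inl ⟨i, j⟩))) (v (Sum.inl ()))
      (gA i) (gCtr i) (FS i) ?_
    intro j t ht
    by_contra h
    exact ht ((hFSmem i t).2 ⟨j, h⟩)
  have hIFS2 : ∀ i ∈ Ifin, (FS i).card = 2 := by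
    intro i hi
    have hiI := (hIfinmem i).1 hi
    have hl := hlen i hiI
    have hj0 : (0 : ℕ) < p i - 1 := by omega
    obtain ⟨c, d, hcd, hc, hd, h0⟩ := exists_pair (n2 i ⟨0, hj0⟩)
    have heq : FS i = {c, d} := by
      ext t
      rw [hFSmem]
      simp only [Finset.mem_insert, Finset.mem_singleton]
      constructor
      · rintro ⟨jj, hjj⟩
        have hjj0 : jj = ⟨0, hj0⟩ := by
          apply Fin.ext
          have := jj.isLt
          omega
        rw [hjj0] at hjj
        by_contra hcon
        push_neg at hcon
        exact hjj (h0 t hcon.1 hcon.2)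
      · rintro (rfl | rfl)
        exacts [⟨⟨0, hj0⟩, hc⟩, ⟨⟨0, hj0⟩, hd⟩]
    rw [heq, Finset.card_insert_of_notMem (by simp [hcd]), Finset.card_singleton]
  have hnotI : ∀ i, i ∉ I → ∀ j, j ≠ i → ∀ t, t ∈ FS i → t ∈ FS j → False := by
    intro i hiI j hj t h1 h2
    exact hiI ((hImem i).2 ⟨j, hj, t, h1, h2⟩)
  -- the union over K is disjoint
  have hA : (Kfin.biUnion FS).card = ∑ i ∈ Kfin, (FS i).card := by
    apply Finset.card_biUnion
    intro i hi j hj hij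
    rw [Function.onFun, Finset.disjoint_left]
    intro t hti htj
    have hiI : i ∉ I := by
      simp only [Finset.mem_coe, Finset.mem_filter, Finset.mem_univ, true_and, hKfin] at hi
      exact hi.1
    exact hnotI i hiI j (Ne.symm hij) t hti htj
  -- multiplicity bound on the union over I
  have hmult : ∀ t : Fin N, (Ifin.filter (fun i => t ∈ FS i)).card ≤ 2 := by
    intro t
    by_contra hgt
    push_neg at hgt
    obtain ⟨a, ha, b, hb, c', hc', hab, hac, hbc⟩ := Finset.two_lt_card.mp (show 2 < (Ifin.filter (fun i => t ∈ FS i)).card by omega)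
    simp only [Finset.mem_filter] at ha hb hc'
    exact huniq a b c' t t hab hac hbc ha.2 hb.2 ha.2 hc'.2
  have hBcard : Ifin.card ≤ (Ifin.biUnion FS).card := by
    have h1 : ∀ i ∈ Ifin, (FS i).card
        = ∑ t ∈ Ifin.biUnion FS, (if t ∈ FS i then 1 else 0) := by
      intro i hi
      rw [← Finset.sum_filter]
      have h2 : (Ifin.biUnion FS).filter (fun t => t ∈ FS i) = FS i := by
        ext t
        simp only [Finset.mem_filter, Finset.mem_biUnion, and_iff_right_iff_imp]
        intro ht
        exact ⟨i, hi, ht⟩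
      rw [h2, Finset.card_eq_sum_ones]
    have h3 : ∑ i ∈ Ifin, (FS i).card
        = ∑ t ∈ Ifin.biUnion FS, (Ifin.filter (fun i => t ∈ FS i)).card := by
      rw [Finset.sum_congr rfl h1, Finset.sum_comm]
      refine Finset.sum_congr rfl fun t _ => ?_
      rw [← Finset.sum_filter]
      exact (Finset.card_eq_sum_ones _).symm
    have h4 : ∑ i ∈ Ifin, (FS i).card = 2 * Ifin.card := by
      rw [Finset.sum_congr rfl hIFS2, Finset.sum_const, smul_eq_mul, mul_comm]
    have h5 : ∑ t ∈ Ifin.biUnion FS, (Ifin.filter (fun i => t ∈ FS i)).card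
        ≤ 2 * (Ifin.biUnion FS).card := by
      calc ∑ t ∈ Ifin.biUnion FS, (Ifin.filter (fun i => t ∈ FS i)).card
          ≤ ∑ _t ∈ Ifin.biUnion FS, 2 := Finset.sum_le_sum fun t _ => hmult t
        _ = 2 * (Ifin.biUnion FS).card := by
            rw [Finset.sum_const, smul_eq_mul, mul_comm]
    omega
  -- unions are disjoint and fit in Fin N
  have hdisjAB : Disjoint (Kfin.biUnion FS) (Ifin.biUnion FS) := by
    rw [Finset.disjoint_left]
    intro t htK htI
    obtain ⟨i, hi, hti⟩ := Finset.mem_biUnion.mp htK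
    obtain ⟨j, hj, htj⟩ := Finset.mem_biUnion.mp htI
    have hiI : i ∉ I := by
      simp only [Finset.mem_filter, Finset.mem_univ, true_and, hKfin] at hi
      exact hi.1
    have hjI : j ∈ I := (hIfinmem j).1 hj
    have hij : j ≠ i := by
      rintro rfl
      exact hiI hjI
    exact hnotI i hiI j hij t hti htj
  have hNbound : (Kfin.biUnion FS).card + (Ifin.biUnion FS).card ≤ N := by
    rw [← Finset.card_union_of_disjoint hdisjAB]
    calc (Kfin.biUnion FS ∪ Ifin.biUnion FS).card ≤ Fintype.card (Fin N) :=
        Finset.card_le_univ _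
      _ = N := Fintype.card_fin N
  have hSK : Ifin.card + ∑ i ∈ Kfin, (p i - 1) + 1 = N := by
    have h1 : ∑ i, (p i - 1)
        = (∑ i ∈ Ifin, (p i - 1) + ∑ i ∈ Zfin, (p i - 1)) + ∑ i ∈ Kfin, (p i - 1) := by
      rw [← Finset.sum_union hdisjIZ, ← Finset.sum_union hdisjIZK, hpart]
    have h2 : ∑ i ∈ Ifin, (p i - 1) = Ifin.card := by
      rw [Finset.sum_congr rfl (fun i hi => hlen i ((hIfinmem i).1 hi)), Finset.sum_const,
        smul_eq_mul, mul_one]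
    have h3 : ∑ i ∈ Zfin, (p i - 1) = 0 := Finset.sum_eq_zero fun i hi => by
      simp only [Finset.mem_filter, Finset.mem_univ, true_and, hZfin] at hi
      omega
    omega
  have hKsum : ∑ i ∈ Kfin, (p i - 1) + Kfin.card ≤ (Kfin.biUnion FS).card := by
    rw [hA]
    calc ∑ i ∈ Kfin, (p i - 1) + Kfin.card = ∑ i ∈ Kfin, ((p i - 1) + 1) := by
          rw [Finset.sum_add_distrib, Finset.sum_const, smul_eq_mul, mul_one]
      _ ≤ ∑ i ∈ Kfin, (FS i).card := Finset.sum_le_sum hKlow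
  have hK1 : Kfin.card ≤ 1 := by omega
  refine ⟨?_, ?_, ?_⟩
  · rw [hIco]
    exact heven
  · omega
  · omega
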